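/- Let V be a finite-dimensional real inner product space, and for a submodule U of V let r_U : V ≃ₗᵢ[ℝ] V denote the reflection across U. Then for all submodules U, T, W of V: Submodule.map r_T (Submodule.map r_U W) = Submodule.map r_{U'} (Submodule.map r_T W), where U' := Submodule.map r_T U. That is, the operation W ▷ U := Submodule.map r_U W on subspaces of V is right self-distributive: (W ▷ U) ▷ T = (W ▷ T) ▷ (U ▷ T). -/

import Mathlib

/-- In a finite-dimensional real inner product space `V`, the operation
`W ▷ U := map (Submodule.reflection U) W` on submodules is right self-distributive:
`(W ▷ U) ▷ T = (W ▷ T) ▷ (U ▷ T)`. -/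
theorem reflection_map_self_distrib {V : Type*} [NormedAddCommGroup V]
    [InnerProductSpace ℝ V] [FiniteDimensional ℝ V] (U T W : Submodule ℝ V) :
    Submodule.map (Submodule.reflection T : V →ₗ[ℝ] V) (Submodule.map (Submodule.reflection U : V →ₗ[ℝ] V) W) =
      Submodule.map (Submodule.reflection (Submodule.map (Submodule.reflection T : V →ₗ[ℝ] V) U) : V →ₗ[ℝ] V)
        (Submodule.map (Submodule.reflection T : V →ₗ[ℝ] V) W) := by
  open Submodule in
  have key : ∀ w : V, (reflection (Submodule.map (reflection T : V →ₗ[ℝ] V) U)) ((reflection T) w)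
      = (reflection T) ((reflection U) w) := by
    intro w
    have : (reflection (U.map ((reflection T).toLinearEquiv : V →ₗ[ℝ] V)))
        ((reflection T) w) = (reflection T) ((reflection U) w) := by
      rw [reflection_map_apply]; simp
    exact this
  ext x
  simp only [Submodule.mem_map]
  constructor
  · rintro ⟨y, ⟨w, hw, rfl⟩, rfl⟩
    exact ⟨reflection T w, ⟨w, hw, rfl⟩, key w⟩
  · rintro ⟨y, ⟨w, hw, rfl⟩, rfl⟩
    exact ⟨reflection U w, ⟨w, hw, rfl⟩, (key w).symm⟩
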